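/- Let $G_+$ be a commutative cancellative monoid with an action of $[0,1]$ satisfying the five axioms ($0.g=0$, $1.g=g$, $(s+t).g = s.g+t.g$ for $s+t\le 1$, $s.(g_1+g_2)=s.g_1+s.g_2$, $(st).g = s.(t.g)$). Extend the action to $\mathbb{R}_{\ge 0}$ via floor and fractional part. Then for all $s,t \ge 0$ and $g \in G_+$, $s.(t.g) = (st).g$. -/

import Mathlib

/-- For a `[0,1]`-action on a commutative cancellative monoid satisfying
the five axioms, the extension to `ℝ≥0` is multiplicative in the scalar variable:
`s.(t.g) = (st).g` for all `s, t ≥ 0`. -/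
theorem extended_action_mul_scalar {G : Type*} [AddCancelCommMonoid G] (act : ℝ → G → G)
    (h0 : ∀ g : G, act 0 g = 0)
    (h1 : ∀ g : G, act 1 g = g)
    (hadd : ∀ s t : ℝ, 0 ≤ s → 0 ≤ t → s + t ≤ 1 → ∀ g : G, act (s + t) g = act s g + act t g)
    (hdist : ∀ s : ℝ, 0 ≤ s → s ≤ 1 → ∀ g₁ g₂ : G, act s (g₁ + g₂) = act s g₁ + act s g₂)
    (hmul : ∀ s t : ℝ, 0 ≤ s → s ≤ 1 → 0 ≤ t → t ≤ 1 → ∀ g : G,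
      act (s * t) g = act s (act t g))
    (ext : ℝ → G → G)
    (hext : ∀ t : ℝ, 0 ≤ t → ∀ g : G, ext t g = ⌊t⌋₊ • g + act (t - (⌊t⌋₊ : ℝ)) g) :
    ∀ s t : ℝ, 0 ≤ s → 0 ≤ t → ∀ g : G, ext s (ext t g) = ext (s * t) g := by
  -- act s 0 = 0
  have act_zeroG : ∀ s : ℝ, 0 ≤ s → s ≤ 1 → act s (0 : G) = 0 := by
    intro s hs hs1
    have h := hdist s hs hs1 0 0
    rw [add_zero] at h
    exact (add_left_cancel (show act s (0:G) + 0 = act s 0 + act s 0 by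
      rw [add_zero]; exact h)).symm
  have ext0 : ∀ g : G, ext 0 g = 0 := by
    intro g
    rw [hext 0 le_rfl]
    simp [h0]
  have ext_frac : ∀ t : ℝ, 0 ≤ t → t < 1 → ∀ g : G, ext t g = act t g := by
    intro t ht ht1 g
    rw [hext t ht, Nat.floor_eq_zero.2 ht1]
    simp
  have act_smul : ∀ s : ℝ, 0 ≤ s → s ≤ 1 → ∀ (n : ℕ) (g : G),
      act s (n • g) = n • act s g := by
    intro s hs hs1 n g
    induction n with
    | zero => simpa using act_zeroG s hs hs1
    | succ k ih =>
      rw [succ_nsmul, hdist s hs hs1, ih, succ_nsmul]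
  -- frac facts
  have frac_nonneg : ∀ t : ℝ, 0 ≤ t → 0 ≤ t - (⌊t⌋₊ : ℝ) := by
    intro t ht; linarith [Nat.floor_le ht]
  have frac_lt_one : ∀ t : ℝ, t - (⌊t⌋₊ : ℝ) < 1 := by
    intro t; linarith [Nat.lt_floor_add_one t]
  -- additivity of ext in the scalar
  have ext_add_scalar : ∀ s t : ℝ, 0 ≤ s → 0 ≤ t → ∀ g : G,
      ext (s + t) g = ext s g + ext t g := by
    intro s t hs ht g
    set a := ⌊s⌋₊ with ha
    set b := ⌊t⌋₊ with hb
    set s' := s - (a : ℝ) with hs'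
    set t' := t - (b : ℝ) with ht'
    have hs'0 : 0 ≤ s' := frac_nonneg s hs
    have ht'0 : 0 ≤ t' := frac_nonneg t ht
    have hs'1 : s' < 1 := frac_lt_one s
    have ht'1 : t' < 1 := frac_lt_one t
    have hst : s + t = ((a + b : ℕ) : ℝ) + (s' + t') := by push_cast; ring
    rw [hext s hs, hext t ht, ← ha, ← hb, ← hs', ← ht']
    by_cases hc : s' + t' < 1
    · have hfloor : ⌊s + t⌋₊ = a + b := by
        rw [hst, add_comm ((a+b:ℕ):ℝ), Nat.floor_add_natCast (by linarith),
          Nat.floor_eq_zero.2 hc, zero_add]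
      rw [hext (s + t) (by linarith), hfloor]
      have : s + t - ((a + b : ℕ) : ℝ) = s' + t' := by push_cast; ring
      rw [this, hadd s' t' hs'0 ht'0 hc.le, add_nsmul]
      abel
    · push_neg at hc
      have hfloor : ⌊s + t⌋₊ = a + b + 1 := by
        rw [hst, add_comm ((a+b:ℕ):ℝ), Nat.floor_add_natCast (by linarith)]
        have : ⌊s' + t'⌋₊ = 1 := by
          apply Nat.floor_eq_iff (by linarith) |>.2
          constructor <;> push_cast <;> linarith
        omega
      rw [hext (s + t) (by linarith), hfloor]
      have hfr : s + t - ((a + b + 1 : ℕ) : ℝ) = s' + t' - 1 := by push_cast; ring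
      rw [hfr]
      have key : act (s' + t' - 1) g + g = act s' g + act t' g := by
        have e1 : act s' g = act (s' + t' - 1) g + act (1 - t') g := by
          have := hadd (s' + t' - 1) (1 - t') (by linarith) (by linarith) (by linarith) g
          rw [show s' + t' - 1 + (1 - t') = s' by ring] at this
          exact this
        have e2 : act (1 - t') g + act t' g = g := by
          have := hadd (1 - t') t' (by linarith) ht'0 (by linarith) g
          rw [show (1 - t') + t' = 1 by ring, h1] at this
          exact this.symm
        rw [e1, add_assoc, e2]
      calc (a + b + 1) • g + act (s' + t' - 1) g
          = (a • g + b • g) + (act (s' + t' - 1) g + g) := by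
            rw [add_nsmul, add_nsmul, one_nsmul]; abel
        _ = (a • g + b • g) + (act s' g + act t' g) := by rw [key]
        _ = a • g + act s' g + (b • g + act t' g) := by abel
  have ext_nsmul : ∀ (n : ℕ) (s : ℝ), 0 ≤ s → ∀ g : G,
      ext ((n : ℝ) * s) g = n • ext s g := by
    intro n s hs g
    induction n with
    | zero => simpa using ext0 g
    | succ k ih =>
      have : ((k + 1 : ℕ) : ℝ) * s = (k : ℝ) * s + s := by push_cast; ring
      rw [this, ext_add_scalar _ _ (by positivity) hs, ih, succ_nsmul]
  -- key: act s' (ext t g) = ext (s' * t) g for s' ∈ [0,1)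
  have key : ∀ s : ℝ, 0 ≤ s → s < 1 → ∀ t : ℝ, 0 ≤ t → ∀ g : G,
      act s (ext t g) = ext (s * t) g := by
    intro s hs hs1 t ht g
    set b := ⌊t⌋₊ with hb
    set t' := t - (b : ℝ) with ht'
    have ht'0 : 0 ≤ t' := frac_nonneg t ht
    have ht'1 : t' < 1 := frac_lt_one t
    have hst' : s * t' < 1 := by
      calc s * t' ≤ 1 * t' := by
            exact mul_le_mul_of_nonneg_right hs1.le ht'0
        _ = t' := one_mul _
        _ < 1 := ht'1
    have lhs : act s (ext t g) = b • act s g + act (s * t') g := by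
      rw [hext t ht, ← hb, ← ht', hdist s hs hs1.le, act_smul s hs hs1.le,
        hmul s t' hs hs1.le ht'0 ht'1.le]
    have rhs : ext (s * t) g = b • act s g + act (s * t') g := by
      have : s * t = (b : ℝ) * s + s * t' := by rw [ht']; ring
      rw [this, ext_add_scalar _ _ (by positivity) (by positivity),
        ext_nsmul b s hs, ext_frac s hs hs1,
        ext_frac (s * t') (by positivity) hst']
    rw [lhs, rhs]
  -- main proof
  intro s t hs ht g
  set a := ⌊s⌋₊ with ha
  set s' := s - (a : ℝ) with hs'
  have hs'0 : 0 ≤ s' := frac_nonneg s hs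
  have hs'1 : s' < 1 := frac_lt_one s
  have split : s * t = (a : ℝ) * t + s' * t := by rw [hs']; ring
  rw [hext s hs, ← ha, ← hs', key s' hs'0 hs'1 t ht, split,
    ext_add_scalar _ _ (by positivity) (by positivity), ext_nsmul a t ht]
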